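/- For every constant C > 0 there exist constants m and M with 0 < m ≤ M such that every ρ > 0 satisfying |Ψ(ρ)| ≤ C obeys m ≤ ρ ≤ M. -/

import Mathlib

/-- The relative pressure potential `G(ρ) = ρ ∫_{ρ̄}^{ρ} s⁻²(p(s) - p̄) ds`
    with `p(s) = a s^γ`. -/
noncomputable def Gfun (a γ ρb ρ : ℝ) : ℝ :=
  ρ * ∫ s in ρb..ρ, (a * s ^ γ - a * ρb ^ γ) / s ^ 2

/-- Kanel''s function `Ψ(ρ) = ∫_{ρ̄}^{ρ} √(G(s)) / s^{3/2} ds`. -/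
noncomputable def PsiFun (a γ ρb ρ : ℝ) : ℝ :=
  ∫ s in ρb..ρ, Real.sqrt (Gfun a γ ρb s) / s ^ ((3 : ℝ) / 2)

open MeasureTheory intervalIntegral Set

section Aux

lemma my_rpow_cont {γ : ℝ} (hγ : 0 ≤ γ) : Continuous fun t : ℝ => t ^ γ :=
  continuous_iff_continuousAt.2 fun x => Real.continuousAt_rpow_const x γ (Or.inr hγ)

lemma my_uIcc_subset_Ioi {c d : ℝ} (hc : 0 < c) (hd : 0 < d) : Set.uIcc c d ⊆ Set.Ioi 0 :=
  fun _ hx => lt_of_lt_of_le (lt_min hc hd) hx.1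

lemma my_gCont (a γ ρb : ℝ) (hγ : 0 ≤ γ) :
    ContinuousOn (fun t : ℝ => (a * t ^ γ - a * ρb ^ γ) / t ^ 2) (Set.Ioi 0) := by
  apply ContinuousOn.div
  · exact ((continuous_const.mul (my_rpow_cont hγ)).sub continuous_const).continuousOn
  · exact (continuous_pow 2).continuousOn
  · intro t ht
    exact pow_ne_zero _ (ne_of_gt ht)

lemma my_g_intInt (a γ ρb : ℝ) (hγ : 0 ≤ γ) {c d : ℝ} (hc : 0 < c) (hd : 0 < d) :
    IntervalIntegrable (fun t : ℝ => (a * t ^ γ - a * ρb ^ γ) / t ^ 2) volume c d :=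
  ((my_gCont a γ ρb hγ).mono (my_uIcc_subset_Ioi hc hd)).intervalIntegrable

lemma my_GCont (a γ ρb : ℝ) (hγ : 0 ≤ γ) (hρb : 0 < ρb) :
    ContinuousOn (Gfun a γ ρb) (Set.Ioi 0) := by
  have h : ∀ ρ ∈ Set.Ioi (0:ℝ), ContinuousAt (Gfun a γ ρb) ρ := by
    intro ρ hρ
    have hd := integral_hasDerivAt_right (my_g_intInt a γ ρb hγ hρb hρ)
      ((my_gCont a γ ρb hγ).stronglyMeasurableAtFilter isOpen_Ioi ρ hρ)
      ((my_gCont a γ ρb hγ).continuousAt (isOpen_Ioi.mem_nhds hρ))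
    exact continuousAt_id.mul hd.continuousAt
  exact fun ρ hρ => (h ρ hρ).continuousWithinAt

lemma my_fCont (a γ ρb : ℝ) (hγ : 0 ≤ γ) (hρb : 0 < ρb) :
    ContinuousOn (fun s : ℝ => Real.sqrt (Gfun a γ ρb s) / s ^ ((3 : ℝ) / 2)) (Set.Ioi 0) := by
  apply ContinuousOn.div
  · exact Real.continuous_sqrt.comp_continuousOn (my_GCont a γ ρb hγ hρb)
  · intro s hs
    exact (Real.continuousAt_rpow_const s _ (Or.inl (ne_of_gt hs))).continuousWithinAt
  · intro s hs
    exact ne_of_gt (Real.rpow_pos_of_pos hs _)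

lemma my_f_intInt (a γ ρb : ℝ) (hγ : 0 ≤ γ) (hρb : 0 < ρb) {c d : ℝ} (hc : 0 < c) (hd : 0 < d) :
    IntervalIntegrable (fun s : ℝ => Real.sqrt (Gfun a γ ρb s) / s ^ ((3 : ℝ) / 2)) volume c d :=
  ((my_fCont a γ ρb hγ hρb).mono (my_uIcc_subset_Ioi hc hd)).intervalIntegrable

lemma my_f_nonneg (a γ ρb : ℝ) {s : ℝ} (hs : 0 < s) :
    0 ≤ Real.sqrt (Gfun a γ ρb s) / s ^ ((3 : ℝ) / 2) :=
  div_nonneg (Real.sqrt_nonneg _) (Real.rpow_pos_of_pos hs _).le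

lemma my_int_one_div {c d : ℝ} (hc : 0 < c) (hd : 0 < d) :
    ∫ s in c..d, 1/s = Real.log (d/c) := by
  apply integral_one_div
  intro h
  exact absurd (lt_of_lt_of_le (lt_min hc hd) h.1) (lt_irrefl 0)

lemma my_int_rpow {c d : ℝ} (hc : 0 < c) (hd : 0 < d) (r : ℝ) (hr : r ≠ -1) :
    ∫ s in c..d, s ^ r = (d ^ (r+1) - c ^ (r+1)) / (r+1) := by
  apply integral_rpow
  exact Or.inr ⟨hr, fun h => absurd (lt_of_lt_of_le (lt_min hc hd) h.1) (lt_irrefl 0)⟩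

lemma my_rpow_intInt {c d r C : ℝ} (hc : 0 < c) (hd : 0 < d) :
    IntervalIntegrable (fun t : ℝ => C * t ^ r) volume c d := by
  apply ContinuousOn.intervalIntegrable
  apply continuousOn_const.mul
  intro t ht
  exact (Real.continuousAt_rpow_const t r
    (Or.inl (ne_of_gt (my_uIcc_subset_Ioi hc hd ht)))).continuousWithinAt

lemma my_one_div_intInt {c d C : ℝ} (hc : 0 < c) (hd : 0 < d) :
    IntervalIntegrable (fun t : ℝ => C * (1/t)) volume c d := by
  apply ContinuousOn.intervalIntegrable
  apply continuousOn_const.mul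
  apply ContinuousOn.div continuousOn_const continuousOn_id
  intro t ht
  exact ne_of_gt (my_uIcc_subset_Ioi hc hd ht)

lemma my_ptwise_large {c0 G s : ℝ} (hs : 0 < s) (hc0 : 0 ≤ c0) (h : c0 * s ≤ G) :
    Real.sqrt c0 * (1/s) ≤ Real.sqrt G / s ^ ((3:ℝ)/2) := by
  have h32 : s ^ ((3:ℝ)/2) = s * Real.sqrt s := by
    rw [show (3:ℝ)/2 = 1 + 1/2 by norm_num, Real.rpow_add hs, Real.rpow_one, Real.sqrt_eq_rpow]
  have hsq : Real.sqrt (c0 * s) = Real.sqrt c0 * Real.sqrt s := Real.sqrt_mul hc0 s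
  have hss : 0 < Real.sqrt s := Real.sqrt_pos.2 hs
  rw [h32, le_div_iff₀ (by positivity : (0:ℝ) < s * Real.sqrt s)]
  calc Real.sqrt c0 * (1/s) * (s * Real.sqrt s) = Real.sqrt c0 * Real.sqrt s := by
        field_simp
    _ = Real.sqrt (c0 * s) := hsq.symm
    _ ≤ Real.sqrt G := Real.sqrt_le_sqrt h

lemma my_ptwise_small {c1 G s : ℝ} (hs : 0 < s) (h : c1 ≤ G) :
    Real.sqrt c1 * s ^ (-(3:ℝ)/2) ≤ Real.sqrt G / s ^ ((3:ℝ)/2) := by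
  have h1 : s ^ (-(3:ℝ)/2) = (s ^ ((3:ℝ)/2))⁻¹ := by
    rw [show -(3:ℝ)/2 = -((3:ℝ)/2) by norm_num, Real.rpow_neg hs.le]
  rw [h1, div_eq_mul_inv]
  exact mul_le_mul_of_nonneg_right (Real.sqrt_le_sqrt h) (by positivity)

/-- The lower bound `c0 s ≤ G s` for `s ≥ 2 ρb`, where
    `c0 = ∫_{ρb}^{2ρb} g`. -/
lemma my_Glarge {a γ ρb : ℝ} (ha : 0 < a) (hγ : 1 ≤ γ) (hρb : 0 < ρb)
    {s : ℝ} (hs : 2*ρb ≤ s) :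
    (∫ t in ρb..(2*ρb), (a * t ^ γ - a * ρb ^ γ) / t ^ 2) * s ≤ Gfun a γ ρb s := by
  have hγ0 : (0:ℝ) < γ := lt_of_lt_of_le one_pos hγ
  have hs0 : 0 < s := lt_of_lt_of_le (by linarith) hs
  have hsplit := integral_add_adjacent_intervals
    (my_g_intInt a γ ρb hγ0.le hρb (by linarith : (0:ℝ) < 2*ρb))
    (my_g_intInt a γ ρb hγ0.le (by linarith : (0:ℝ) < 2*ρb) hs0)
  have h2 : 0 ≤ ∫ t in (2*ρb)..s, (a * t ^ γ - a * ρb ^ γ) / t ^ 2 := by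
    apply integral_nonneg hs
    intro t ht
    have ht0 : 0 < t := lt_of_lt_of_le (by linarith) ht.1
    apply div_nonneg _ (by positivity)
    have h1 : ρb ≤ t := by linarith [ht.1]
    have := Real.rpow_le_rpow hρb.le h1 hγ0.le
    nlinarith
  rw [Gfun, ← hsplit]
  nlinarith

lemma my_c0_pos {a γ ρb : ℝ} (ha : 0 < a) (hγ : 1 ≤ γ) (hρb : 0 < ρb) :
    0 < ∫ t in ρb..(2*ρb), (a * t ^ γ - a * ρb ^ γ) / t ^ 2 := by
  have hγ0 : (0:ℝ) < γ := lt_of_lt_of_le one_pos hγ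
  apply intervalIntegral_pos_of_pos_on
    (my_g_intInt a γ ρb hγ0.le hρb (by linarith)) _ (by linarith)
  intro x hx
  have hx0 : 0 < x := lt_trans hρb hx.1
  apply div_pos
  · have := Real.rpow_lt_rpow hρb.le hx.1 hγ0
    nlinarith
  · positivity

/-- The lower bound `a ρb^γ / 4 ≤ G s` for `0 < s ≤ ρb/4`. -/
lemma my_Gsmall {a γ ρb : ℝ} (ha : 0 < a) (hγ : 1 ≤ γ) (hρb : 0 < ρb)
    {s : ℝ} (hs : 0 < s) (hs4 : s ≤ ρb/4) :
    a * ρb ^ γ / 4 ≤ Gfun a γ ρb s := by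
  have hγ0 : (0:ℝ) < γ := lt_of_lt_of_le one_pos hγ
  have hρbγ : (0:ℝ) < ρb ^ γ := Real.rpow_pos_of_pos hρb γ
  have hgi : ∀ c d : ℝ, 0 < c → 0 < d →
      IntervalIntegrable (fun t : ℝ => (a * t ^ γ - a * ρb ^ γ) / t ^ 2) volume c d :=
    fun c d hc hd => my_g_intInt a γ ρb hγ0.le hc hd
  set g : ℝ → ℝ := fun t => (a * t ^ γ - a * ρb ^ γ) / t ^ 2 with hg
  set c : ℝ := a * ρb ^ γ / 2 with hc
  have hsplit := integral_add_adjacent_intervals (hgi s (ρb/2) hs (by linarith))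
    (hgi (ρb/2) ρb (by linarith) hρb)
  have hI2 : (∫ t in (ρb/2)..ρb, g t) ≤ 0 := by
    have := integral_mono_on (by linarith : ρb/2 ≤ ρb) (hgi (ρb/2) ρb (by linarith) hρb)
      (_root_.intervalIntegrable_const (c := (0:ℝ)))
      (fun t ht => by
        have ht0 : 0 < t := lt_of_lt_of_le (by linarith) ht.1
        have h1 : t ^ γ ≤ ρb ^ γ := Real.rpow_le_rpow ht0.le ht.2 hγ0.le
        have : a * t ^ γ - a * ρb ^ γ ≤ 0 := by nlinarith
        exact div_nonpos_of_nonpos_of_nonneg this (by positivity))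
    simpa using this
  have hI1 : (∫ t in s..(ρb/2), g t) ≤ -c * (s⁻¹ - (ρb/2)⁻¹) := by
    have hmono := integral_mono_on (by linarith : s ≤ ρb/2) (hgi s (ρb/2) hs (by linarith))
      (my_rpow_intInt (C := -c) (r := (-2:ℝ)) hs (by linarith))
      (fun t ht => by
        have ht0 : 0 < t := lt_of_lt_of_le hs ht.1
        have hneg : t ^ (-2:ℝ) = (t ^ (2:ℕ))⁻¹ := by
          rw [show (-2:ℝ) = -(2:ℕ) by norm_num, Real.rpow_neg ht0.le, Real.rpow_natCast]
        have h1 : t ^ γ ≤ (ρb/2) ^ γ := Real.rpow_le_rpow ht0.le ht.2 hγ0.le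
        have h2 : (ρb/2) ^ γ = ρb ^ γ / 2 ^ γ := Real.div_rpow hρb.le (by norm_num : (0:ℝ) ≤ 2) γ
        have h3 : (2:ℝ) ≤ 2 ^ γ := by
          calc (2:ℝ) = 2 ^ (1:ℝ) := (Real.rpow_one 2).symm
          _ ≤ 2 ^ γ := Real.rpow_le_rpow_left_iff one_lt_two |>.2 hγ
        have h4 : (ρb/2) ^ γ ≤ ρb ^ γ / 2 := by
          rw [h2]; gcongr
        have ht2 : (0:ℝ) < t^2 := by positivity
        show (a * t ^ γ - a * ρb ^ γ) / t ^ 2 ≤ -c * t ^ (-2:ℝ)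
        rw [hneg, ← div_eq_mul_inv]
        exact (div_le_div_iff_of_pos_right ht2).2 (by nlinarith))
    have hval : (∫ t in s..(ρb/2), -c * t ^ (-2:ℝ)) = -c * (s⁻¹ - (ρb/2)⁻¹) := by
      have e : (-2:ℝ)+1 = -1 := by norm_num
      rw [intervalIntegral.integral_const_mul, my_int_rpow hs (by linarith) (-2) (by norm_num), e,
        Real.rpow_neg_one, Real.rpow_neg_one]
      ring
    rw [hval] at hmono
    exact hmono
  have hG : Gfun a γ ρb s = -s * ∫ t in s..ρb, g t := by
    rw [Gfun, integral_symm]; simp only [hg]; ring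
  rw [hG, ← hsplit]
  have hsum : (∫ t in s..(ρb/2), g t) + (∫ t in (ρb/2)..ρb, g t) ≤ -c * (s⁻¹ - (ρb/2)⁻¹) := by
    linarith
  have hfin : a * ρb ^ γ / 4 ≤ -s * (-c * (s⁻¹ - (ρb/2)⁻¹)) := by
    have hss : s * s⁻¹ = 1 := mul_inv_cancel₀ hs.ne'
    have hρb2 : (ρb/2)⁻¹ = 2/ρb := by field_simp
    rw [hρb2, hc]
    have h2 : s * (2/ρb) ≤ 1/2 := by
      rw [show s * (2/ρb) = (2*s)/ρb by ring, div_le_div_iff₀ hρb (by norm_num : (0:ℝ) < 2)]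
      nlinarith
    have expand : -s * (-(a * ρb ^ γ / 2) * (s⁻¹ - 2/ρb))
        = (a * ρb ^ γ / 2) * (s * s⁻¹) - (a * ρb ^ γ / 2) * (s * (2/ρb)) := by ring
    rw [expand, hss]
    nlinarith [mul_le_mul_of_nonneg_left h2 (by positivity : (0:ℝ) ≤ a * ρb ^ γ / 2)]
  calc a * ρb ^ γ / 4 ≤ -s * (-c * (s⁻¹ - (ρb/2)⁻¹)) := hfin
    _ ≤ -s * ((∫ t in s..(ρb/2), g t) + (∫ t in (ρb/2)..ρb, g t)) :=
        mul_le_mul_of_nonpos_left hsum (by linarith)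

/-- Lower bound for Ψ for large ρ. -/
lemma my_PsiLarge {a γ ρb : ℝ} (ha : 0 < a) (hγ : 1 ≤ γ) (hρb : 0 < ρb)
    {ρ : ℝ} (hρ : 2*ρb ≤ ρ) :
    Real.sqrt (∫ t in ρb..(2*ρb), (a * t ^ γ - a * ρb ^ γ) / t ^ 2) *
      Real.log (ρ/(2*ρb)) ≤ PsiFun a γ ρb ρ := by
  have hγ0 : (0:ℝ) < γ := lt_of_lt_of_le one_pos hγ
  set c0 : ℝ := ∫ t in ρb..(2*ρb), (a * t ^ γ - a * ρb ^ γ) / t ^ 2 with hc0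
  have hc0pos : 0 < c0 := my_c0_pos ha hγ hρb
  have hρ0 : 0 < ρ := lt_of_lt_of_le (by linarith) hρ
  set f : ℝ → ℝ := fun s => Real.sqrt (Gfun a γ ρb s) / s ^ ((3:ℝ)/2) with hf
  have hsplit := integral_add_adjacent_intervals
    (my_f_intInt a γ ρb hγ0.le hρb hρb (by linarith : (0:ℝ) < 2*ρb))
    (my_f_intInt a γ ρb hγ0.le hρb (by linarith : (0:ℝ) < 2*ρb) hρ0)
  have h1 : 0 ≤ ∫ s in ρb..(2*ρb), f s := by
    apply integral_nonneg (by linarith)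
    intro s hs
    exact my_f_nonneg a γ ρb (lt_of_lt_of_le hρb hs.1)
  have h2 : Real.sqrt c0 * Real.log (ρ/(2*ρb)) ≤ ∫ s in (2*ρb)..ρ, f s := by
    have hmono := integral_mono_on hρ
      (my_one_div_intInt (C := Real.sqrt c0) (by linarith : (0:ℝ) < 2*ρb) hρ0)
      (my_f_intInt a γ ρb hγ0.le hρb (by linarith : (0:ℝ) < 2*ρb) hρ0)
      (fun s hs => by
        have hs0 : 0 < s := lt_of_lt_of_le (by linarith) hs.1
        exact my_ptwise_large hs0 hc0pos.le (my_Glarge ha hγ hρb hs.1 |>.trans_eq' (by ring)))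
    have hval : (∫ s in (2*ρb)..ρ, Real.sqrt c0 * (1/s)) = Real.sqrt c0 * Real.log (ρ/(2*ρb)) := by
      rw [intervalIntegral.integral_const_mul, my_int_one_div (by linarith : (0:ℝ) < 2*ρb) hρ0]
    rw [hval] at hmono
    exact hmono
  rw [PsiFun, ← hsplit]
  exact le_add_of_nonneg_of_le h1 h2

/-- Lower bound for -Ψ for small ρ. -/
lemma my_PsiSmall {a γ ρb : ℝ} (ha : 0 < a) (hγ : 1 ≤ γ) (hρb : 0 < ρb)
    {ρ : ℝ} (hρ0 : 0 < ρ) (hρ : ρ ≤ ρb/4) :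
    2 * Real.sqrt (a * ρb ^ γ / 4) *
      ((Real.sqrt ρ)⁻¹ - (Real.sqrt (ρb/4))⁻¹) ≤ -PsiFun a γ ρb ρ := by
  have hγ0 : (0:ℝ) < γ := lt_of_lt_of_le one_pos hγ
  set c1 : ℝ := a * ρb ^ γ / 4 with hc1
  have hc1pos : 0 < c1 := by
    have : (0:ℝ) < ρb ^ γ := Real.rpow_pos_of_pos hρb γ
    positivity
  set f : ℝ → ℝ := fun s => Real.sqrt (Gfun a γ ρb s) / s ^ ((3:ℝ)/2) with hf
  have hρb4 : (0:ℝ) < ρb/4 := by linarith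
  have hsplit := integral_add_adjacent_intervals
    (my_f_intInt a γ ρb hγ0.le hρb hρ0 hρb4)
    (my_f_intInt a γ ρb hγ0.le hρb hρb4 hρb)
  have h2 : 0 ≤ ∫ s in (ρb/4)..ρb, f s := by
    apply integral_nonneg (by linarith)
    intro s hs
    exact my_f_nonneg a γ ρb (lt_of_lt_of_le hρb4 hs.1)
  have h1 : 2 * Real.sqrt c1 * ((Real.sqrt ρ)⁻¹ - (Real.sqrt (ρb/4))⁻¹)
      ≤ ∫ s in ρ..(ρb/4), f s := by
    have hmono := integral_mono_on hρ
      (my_rpow_intInt (C := Real.sqrt c1) (r := -(3:ℝ)/2) hρ0 hρb4)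
      (my_f_intInt a γ ρb hγ0.le hρb hρ0 hρb4)
      (fun s hs => by
        have hs0 : 0 < s := lt_of_lt_of_le hρ0 hs.1
        exact my_ptwise_small hs0 (my_Gsmall ha hγ hρb hs0 hs.2))
    have hexp : ∀ x : ℝ, 0 < x → x ^ (-(3:ℝ)/2 + 1) = (Real.sqrt x)⁻¹ := by
      intro x hx
      rw [show -(3:ℝ)/2 + 1 = -(1/2) by norm_num, Real.rpow_neg hx.le,
        Real.sqrt_eq_rpow]
    have hval : (∫ s in ρ..(ρb/4), Real.sqrt c1 * s ^ (-(3:ℝ)/2))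
        = 2 * Real.sqrt c1 * ((Real.sqrt ρ)⁻¹ - (Real.sqrt (ρb/4))⁻¹) := by
      rw [intervalIntegral.integral_const_mul, my_int_rpow hρ0 hρb4 (-(3:ℝ)/2) (by norm_num),
        hexp _ hρ0, hexp _ hρb4]
      have : -(3:ℝ)/2 + 1 = -(1/2) := by norm_num
      rw [this]
      ring
    rw [hval] at hmono
    exact hmono
  have hPsi : -PsiFun a γ ρb ρ = (∫ s in ρ..(ρb/4), f s) + ∫ s in (ρb/4)..ρb, f s := by
    rw [PsiFun, integral_symm, neg_neg, ← hsplit]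
  rw [hPsi]
  linarith

end Aux

theorem PsiFun_bound_implies_density_bounds (a γ ρb : ℝ)
    (ha : 0 < a) (hγ : 1 ≤ γ) (hρb : 0 < ρb) :
    ∀ C : ℝ, 0 < C → ∃ m M : ℝ, 0 < m ∧ m ≤ M ∧
      ∀ ρ : ℝ, 0 < ρ → |PsiFun a γ ρb ρ| ≤ C → m ≤ ρ ∧ ρ ≤ M := by
  intro C hC
  set c0 : ℝ := ∫ t in ρb..(2*ρb), (a * t ^ γ - a * ρb ^ γ) / t ^ 2 with hc0
  have hc0pos : 0 < c0 := my_c0_pos ha hγ hρb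
  set c1 : ℝ := a * ρb ^ γ / 4 with hc1
  have hc1pos : 0 < c1 := by
    have : (0:ℝ) < ρb ^ γ := Real.rpow_pos_of_pos hρb γ
    positivity
  have hsc0 : 0 < Real.sqrt c0 := Real.sqrt_pos.2 hc0pos
  have hsc1 : 0 < Real.sqrt c1 := Real.sqrt_pos.2 hc1pos
  set D : ℝ := C / (2 * Real.sqrt c1) + (Real.sqrt (ρb/4))⁻¹ + 1 with hD
  have hDpos : 0 < D := by
    have h1 : 0 < C / (2 * Real.sqrt c1) := by positivity
    have h2 : 0 < (Real.sqrt (ρb/4))⁻¹ := by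
      have : 0 < Real.sqrt (ρb/4) := Real.sqrt_pos.2 (by linarith)
      positivity
    rw [hD]
    linarith
  refine ⟨min (ρb/4) (D^2)⁻¹, max (2*ρb) (2*ρb * Real.exp ((C+1)/Real.sqrt c0)), ?_, ?_, ?_⟩
  · exact lt_min (by linarith) (by positivity)
  · calc min (ρb/4) (D^2)⁻¹ ≤ ρb/4 := min_le_left _ _
      _ ≤ 2*ρb := by linarith
      _ ≤ max (2*ρb) (2*ρb * Real.exp ((C+1)/Real.sqrt c0)) := le_max_left _ _
  · intro ρ hρ0 hbound
    constructor
    · by_contra hcon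
      push_neg at hcon
      have hρ4 : ρ ≤ ρb/4 := le_of_lt (lt_of_lt_of_le hcon (min_le_left _ _))
      have hρD : ρ ≤ (D^2)⁻¹ := le_of_lt (lt_of_lt_of_le hcon (min_le_right _ _))
      have hsqrt : Real.sqrt ρ ≤ D⁻¹ := by
        rw [show (D:ℝ)⁻¹ = Real.sqrt ((D^2)⁻¹) by
          rw [Real.sqrt_inv, Real.sqrt_sq hDpos.le]]
        exact Real.sqrt_le_sqrt hρD
      have hinv : D ≤ (Real.sqrt ρ)⁻¹ := by
        have hsρ : 0 < Real.sqrt ρ := Real.sqrt_pos.2 hρ0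
        rw [← inv_inv D]
        exact inv_anti₀ hsρ hsqrt
      have hmain := my_PsiSmall ha hγ hρb hρ0 hρ4
      have hstep : C + 2 * Real.sqrt c1 ≤ 2 * Real.sqrt c1 *
          ((Real.sqrt ρ)⁻¹ - (Real.sqrt (ρb/4))⁻¹) := by
        have h1 : D - (Real.sqrt (ρb/4))⁻¹ ≤ (Real.sqrt ρ)⁻¹ - (Real.sqrt (ρb/4))⁻¹ := by
          linarith
        have h2 : D - (Real.sqrt (ρb/4))⁻¹ = C / (2 * Real.sqrt c1) + 1 := by rw [hD]; ring
        have h3 : 2 * Real.sqrt c1 * (C / (2 * Real.sqrt c1) + 1) = C + 2 * Real.sqrt c1 := by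
          field_simp
        calc C + 2 * Real.sqrt c1 = 2 * Real.sqrt c1 * (C / (2 * Real.sqrt c1) + 1) := h3.symm
          _ = 2 * Real.sqrt c1 * (D - (Real.sqrt (ρb/4))⁻¹) := by rw [h2]
          _ ≤ 2 * Real.sqrt c1 * ((Real.sqrt ρ)⁻¹ - (Real.sqrt (ρb/4))⁻¹) := by
              apply mul_le_mul_of_nonneg_left h1 (by positivity)
      have habs : -PsiFun a γ ρb ρ ≤ C := (abs_le.1 hbound).1 |> fun h => by linarith
      linarith
    · by_contra hcon
      push_neg at hcon
      have hρ2 : 2*ρb ≤ ρ := le_of_lt (lt_of_le_of_lt (le_max_left _ _) hcon)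
      have hρexp : 2*ρb * Real.exp ((C+1)/Real.sqrt c0) ≤ ρ :=
        le_of_lt (lt_of_le_of_lt (le_max_right _ _) hcon)
      have hlog : (C+1)/Real.sqrt c0 ≤ Real.log (ρ/(2*ρb)) := by
        rw [show (C+1)/Real.sqrt c0 = Real.log (Real.exp ((C+1)/Real.sqrt c0)) by
          rw [Real.log_exp]]
        apply Real.log_le_log (Real.exp_pos _)
        rw [le_div_iff₀ (by linarith : (0:ℝ) < 2*ρb)]
        linarith [hρexp]
      have hmain := my_PsiLarge ha hγ hρb hρ2
      have hstep : C + 1 ≤ Real.sqrt c0 * Real.log (ρ/(2*ρb)) := by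
        calc C + 1 = Real.sqrt c0 * ((C+1)/Real.sqrt c0) := by field_simp
          _ ≤ Real.sqrt c0 * Real.log (ρ/(2*ρb)) :=
              mul_le_mul_of_nonneg_left hlog hsc0.le
      have habs : PsiFun a γ ρb ρ ≤ C := (abs_le.1 hbound).2
      rw [← hc0] at hmain
      linarith
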